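/- Let r ≥ 2 and let C be a Steiner system S(2,r,r²), i.e., an r-uniform hypergraph on a vertex set of size r² in which every pair of distinct vertices is contained in exactly one hyperedge. Then C contains no copy of P_4^r: there do not exist four distinct hyperedges e_1, e_2, e_3, e_4 of C with e_1 ∩ e_2 ≠ ∅, e_2 ∩ e_3 ≠ ∅, e_3 ∩ e_4 ≠ ∅, e_1 ∩ e_3 = ∅, e_1 ∩ e_4 = ∅, and e_2 ∩ e_4 = ∅. -/
import Mathlib


/-- A Steiner system S(2,r,r²) contains no copy of the linear path P_4^r. -/
theorem stmt_16 {V : Type*} [Fintype V] [DecidableEq V]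
    (r : ℕ) (hr : 2 ≤ r)
    (hcard : Fintype.card V = r ^ 2)
    (E : Finset (Finset V))
    (huniform : ∀ e ∈ E, e.card = r)
    (hsteiner : ∀ u v : V, u ≠ v → ∃! e, e ∈ E ∧ u ∈ e ∧ v ∈ e) :
    ¬ ∃ e₁ ∈ E, ∃ e₂ ∈ E, ∃ e₃ ∈ E, ∃ e₄ ∈ E,
      e₁ ≠ e₂ ∧ e₁ ≠ e₃ ∧ e₁ ≠ e₄ ∧ e₂ ≠ e₃ ∧ e₂ ≠ e₄ ∧ e₃ ≠ e₄ ∧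
      (e₁ ∩ e₂).Nonempty ∧ (e₂ ∩ e₃).Nonempty ∧ (e₃ ∩ e₄).Nonempty ∧
      e₁ ∩ e₃ = ∅ ∧ e₁ ∩ e₄ = ∅ ∧ e₂ ∩ e₄ = ∅ := by
  rintro ⟨e₁, he₁, e₂, he₂, e₃, he₃, e₄, he₄, h12, h13, h14, h23, h24, h34,
    n12, n23, n34, d13, d14, d24⟩
  classical
  -- uniqueness helper
  have uniq : ∀ {u v : V} {e e' : Finset V}, u ≠ v → e ∈ E → u ∈ e → v ∈ e →
      e' ∈ E → u ∈ e' → v ∈ e' → e = e' := by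
    intro u v e e' huv he hu hv he' hu' hv'
    obtain ⟨w, -, hw⟩ := hsteiner u v huv
    rw [hw e ⟨he, hu, hv⟩, hw e' ⟨he', hu', hv'⟩]
  obtain ⟨p, hp⟩ := n34
  rw [Finset.mem_inter] at hp
  have hp1 : p ∉ e₁ := fun h => by
    have : p ∈ e₁ ∩ e₃ := Finset.mem_inter.2 ⟨h, hp.1⟩
    simp [d13] at this
  set F : Finset (Finset V) := E.filter (fun e => p ∈ e) with hF
  have hmemF : ∀ e, e ∈ F ↔ e ∈ E ∧ p ∈ e := by intro e; simp [hF]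
  -- the sets e.erase p, e ∈ F, partition univ.erase p
  have hcover : F.biUnion (fun e => e.erase p) = Finset.univ.erase p := by
    ext v
    simp only [Finset.mem_biUnion, Finset.mem_erase, Finset.mem_univ, and_true]
    constructor
    · rintro ⟨e, he, hv, -⟩; exact hv
    · intro hv
      obtain ⟨e, ⟨heE, hpe, hve⟩, -⟩ := hsteiner p v (Ne.symm hv)
      exact ⟨e, (hmemF e).2 ⟨heE, hpe⟩, hv, hve⟩
  have hdisj : (F : Set (Finset V)).PairwiseDisjoint (fun e => e.erase p) := by
    intro e he e' he' hne
    simp only [Function.onFun]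
    rw [Finset.disjoint_left]
    intro v hv hv'
    rw [Finset.mem_erase] at hv hv'
    rw [Finset.mem_coe, hmemF] at he he'
    exact hne (uniq hv.1.symm he.1 he.2 hv.2 he'.1 he'.2 hv'.2)
  have hcardsum : F.card * (r - 1) = r ^ 2 - 1 := by
    have h1 : (F.biUnion (fun e => e.erase p)).card = ∑ e ∈ F, (e.erase p).card :=
      Finset.card_biUnion hdisj
    rw [hcover] at h1
    rw [Finset.card_erase_of_mem (Finset.mem_univ p), Finset.card_univ, hcard] at h1
    rw [h1]
    rw [Finset.sum_congr rfl (fun e he => ?_), Finset.sum_const, smul_eq_mul]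
    rw [hmemF] at he
    rw [Finset.card_erase_of_mem he.2, huniform e he.1]
  have hcardF : F.card = r + 1 := by
    have h2 : (r + 1) * (r - 1) = r ^ 2 - 1 := by
      cases' Nat.exists_eq_add_of_le hr with k hk
      subst hk
      have e1 : (2 + k + 1) * (2 + k - 1) = k * k + 4 * k + 3 := by
        have : 2 + k - 1 = k + 1 := by omega
        rw [this]; ring
      have e2 : (2 + k) ^ 2 = k * k + 4 * k + 4 := by ring
      omega
    have h3 : F.card * (r - 1) = (r + 1) * (r - 1) := by rw [hcardsum, h2]
    exact Nat.eq_of_mul_eq_mul_right (by omega) h3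
  -- build an injection from e₁ into F minus {e₃, e₄}
  have hq : ∀ q : V, ∃ e, q ∈ e₁ → e ∈ E ∧ p ∈ e ∧ q ∈ e := by
    intro q
    by_cases hq : q ∈ e₁
    · have hpq : p ≠ q := fun h => hp1 (h ▸ hq)
      obtain ⟨e, he, -⟩ := hsteiner p q hpq
      exact ⟨e, fun _ => he⟩
    · exact ⟨∅, fun h => absurd h hq⟩
  choose f hf using hq
  have hinj : Set.InjOn (fun q => f q) e₁ := by
    intro q hq q' hq' hff
    by_contra hne
    obtain ⟨hfE, hpf, hqf⟩ := hf q hq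
    obtain ⟨hfE', hpf', hqf'⟩ := hf q' hq'
    simp only at hff
    have : f q = e₁ := uniq hne hfE hqf (hff ▸ hqf') he₁ hq hq'
    exact hp1 (this ▸ hpf)
  have hsub : ∀ q (hqm : q ∈ e₁), f q ∈ (F.erase e₃).erase e₄ := by
    intro q hqm
    obtain ⟨hfE, hpf, hqf⟩ := hf q hqm
    rw [Finset.mem_erase, Finset.mem_erase, hmemF]
    refine ⟨fun h => ?_, fun h => ?_, hfE, hpf⟩
    · have : q ∈ e₁ ∩ e₄ := Finset.mem_inter.2 ⟨hqm, h ▸ hqf⟩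
      simp [d14] at this
    · have : q ∈ e₁ ∩ e₃ := Finset.mem_inter.2 ⟨hqm, h ▸ hqf⟩
      simp [d13] at this
  have hle : e₁.card ≤ ((F.erase e₃).erase e₄).card := by
    apply Finset.card_le_card_of_injOn f
    · intro q hqm; exact hsub q hqm
    · exact hinj
  have he₃F : e₃ ∈ F := (hmemF e₃).2 ⟨he₃, hp.1⟩
  have he₄F : e₄ ∈ F := (hmemF e₄).2 ⟨he₄, hp.2⟩
  have hcard2 : ((F.erase e₃).erase e₄).card = r - 1 := by
    rw [Finset.card_erase_of_mem, Finset.card_erase_of_mem he₃F, hcardF]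
    · omega
    · exact Finset.mem_erase.2 ⟨Ne.symm h34, he₄F⟩
  rw [huniform e₁ he₁, hcard2] at hle
  omega
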